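/- Let f be an entropy generator and suppose there exist constants α, β, γ ∈ ℝ such that for all probability distributions P, Q on ℕ one has H_f(P⊗Q) = α·H_f(P) + β·H_f(Q) − γ·H_f(P)·H_f(Q). Then α = β = 1, and f satisfies the functional equation f(x·y) = x·f(y) + y·f(x) + γ·f(x)·f(y) for all x, y ∈ [0, ∞). -/

import Mathlib

/-- A probability distribution on ℕ: nonnegative weights summing to 1. -/
def IsProbDist (p : ℕ → ℝ) : Prop := (∀ i, 0 ≤ p i) ∧ HasSum p 1

/-- An entropy generator: real analytic on `[0,∞)`, strictly convex on `[0,∞)`,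
with `f 0 = f 1 = 0` and `f' 1 = 1`. -/
def IsEntropyGenerator (f : ℝ → ℝ) : Prop :=
  (∀ x ∈ Set.Ici (0 : ℝ), AnalyticAt ℝ f x) ∧
  StrictConvexOn ℝ (Set.Ici (0 : ℝ)) f ∧
  f 0 = 0 ∧ f 1 = 0 ∧ deriv f 1 = 1

open Set Filter Topology

noncomputable def d3 (x y : ℝ) : ℕ → ℝ :=
  fun n => if n = 0 then x else if n = 1 then y else if n = 2 then 1 - x - y else 0

lemma d3_zero {x y : ℝ} {n : ℕ} (h : n ∉ ({0,1,2} : Finset ℕ)) : d3 x y n = 0 := by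
  simp only [Finset.mem_insert, Finset.mem_singleton] at h
  push_neg at h
  simp [d3, h.1, h.2.1, h.2.2]

lemma d3_prob {x y : ℝ} (hx : 0 ≤ x) (hy : 0 ≤ y) (hxy : x + y ≤ 1) : IsProbDist (d3 x y) := by
  constructor
  · intro i
    by_cases h0 : i = 0
    · simp [d3, h0, hx]
    by_cases h1 : i = 1
    · simp [d3, h0, h1, hy]
    by_cases h2 : i = 2
    · simp [d3, h0, h1, h2]; linarith
    · simp [d3, h0, h1, h2]
  · have : HasSum (d3 x y) (∑ b ∈ ({0,1,2} : Finset ℕ), d3 x y b) := hasSum_sum_of_ne_finset_zero (s := ({0,1,2} : Finset ℕ))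
      (f := d3 x y) (fun b hb => d3_zero hb)
    have hs : (∑ b ∈ ({0,1,2} : Finset ℕ), d3 x y b) = 1 := by
      rw [show ({0,1,2} : Finset ℕ) = insert 0 (insert 1 {2}) from rfl,
        Finset.sum_insert (by decide), Finset.sum_insert (by decide), Finset.sum_singleton]
      simp [d3]
    rwa [hs] at this

lemma tsum3 {f : ℝ → ℝ} (hf0 : f 0 = 0) (x y : ℝ) :
    ∑' i, f (d3 x y i) = f x + f y + f (1 - x - y) := by
  rw [tsum_eq_sum (s := ({0,1,2} : Finset ℕ)) (fun b hb => by rw [d3_zero hb, hf0])]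
  rw [show ({0,1,2} : Finset ℕ) = insert 0 (insert 1 {2}) from rfl,
    Finset.sum_insert (by decide), Finset.sum_insert (by decide), Finset.sum_singleton]
  simp [d3]; ring

lemma tsum9 {f : ℝ → ℝ} (hf0 : f 0 = 0) (a b c d : ℝ) :
    ∑' ij : ℕ × ℕ, f (d3 a b ij.1 * d3 c d ij.2) =
      (f (a*c) + f (a*d) + f (a*(1-c-d))) + (f (b*c) + f (b*d) + f (b*(1-c-d)))
        + (f ((1-a-b)*c) + f ((1-a-b)*d) + f ((1-a-b)*(1-c-d))) := by
  rw [tsum_eq_sum (s := (({0,1,2} : Finset ℕ) ×ˢ ({0,1,2} : Finset ℕ)))]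
  · rw [Finset.sum_product]
    rw [show ({0,1,2} : Finset ℕ) = insert 0 (insert 1 {2}) from rfl]
    simp only [Finset.sum_insert (by decide : (0:ℕ) ∉ insert 1 {2}),
      Finset.sum_insert (by decide : (1:ℕ) ∉ ({2} : Finset ℕ)), Finset.sum_singleton]
    simp [d3]; ring
  · intro ij hij
    rw [Finset.mem_product] at hij
    push_neg at hij
    by_cases h1 : ij.1 ∈ ({0,1,2} : Finset ℕ)
    · rw [d3_zero (hij h1), mul_zero, hf0]
    · rw [d3_zero h1, zero_mul, hf0]


lemma additive_linear (ψ : ℝ → ℝ) (hψ : ∀ x ∈ Set.Icc (0:ℝ) 1, AnalyticAt ℝ ψ x)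
    (hadd : ∀ a b : ℝ, 0 ≤ a → 0 ≤ b → a + b ≤ 1 → ψ (a + b) = ψ a + ψ b) :
    ∀ x ∈ Set.Icc (0:ℝ) 1, ψ x = ψ 1 * x := by
  have hψ0 : ψ 0 = 0 := by
    have := hadd 0 0 le_rfl le_rfl (by norm_num)
    simp at this; linarith [this]
  set c := deriv ψ 0 with hc
  -- derivative is constant on [0,1)
  have key : ∀ s ∈ Ico (0:ℝ) 1, HasDerivAt ψ c s := by
    intro s hs
    have hsm : s ∈ Icc (0:ℝ) 1 := ⟨hs.1, hs.2.le⟩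
    have hu : AnalyticAt ℝ (fun x : ℝ => ψ (s + x)) 0 := by
      have hinner : AnalyticAt ℝ (fun x : ℝ => s + x) 0 := analyticAt_const.add analyticAt_id
      have hval : AnalyticAt ℝ ψ ((fun x : ℝ => s + x) 0) := by simpa using hψ s hsm
      have := hval.comp hinner
      exact this
    have hv : AnalyticAt ℝ (fun x : ℝ => ψ s + ψ x) 0 :=
      analyticAt_const.add (hψ 0 (by norm_num))
    have hfreq : ∃ᶠ x in 𝓝[≠] (0:ℝ), (fun x : ℝ => ψ (s + x)) x = (fun x : ℝ => ψ s + ψ x) x := by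
      have hev : ∀ᶠ x in 𝓝[>] (0:ℝ), ψ (s + x) = ψ s + ψ x := by
        filter_upwards [Ioo_mem_nhdsGT_of_mem (Set.left_mem_Ico.2 (by linarith [hs.2] : (0:ℝ) < 1 - s))] with x hx
        exact hadd s x hs.1 hx.1.le (by linarith [hx.2])
      exact (hev.frequently).filter_mono (nhdsWithin_mono _ (fun x hx => ne_of_gt hx))
    have heq : (fun x : ℝ => ψ (s + x)) =ᶠ[𝓝 (0:ℝ)] (fun x : ℝ => ψ s + ψ x) :=
      (hu.frequently_eq_iff_eventually_eq hv).1 hfreq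
    have hderivu : HasDerivAt (fun x : ℝ => ψ (s + x)) (deriv ψ s) 0 := by
      have h1 : HasDerivAt (fun x : ℝ => s + x) 1 0 := (hasDerivAt_id 0).const_add s
      have h2 : HasDerivAt ψ (deriv ψ s) (s + 0) := by
        simpa using ((hψ s hsm).differentiableAt.hasDerivAt)
      have h3 := h2.comp 0 h1
      rw [mul_one] at h3
      exact h3
    have hderivv : HasDerivAt (fun x : ℝ => ψ s + ψ x) c 0 :=
      ((hψ 0 (by norm_num)).differentiableAt.hasDerivAt).const_add (ψ s)
    have : deriv ψ s = c := by
      rw [← hderivu.deriv, ← hderivv.deriv]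
      exact heq.deriv_eq
    exact this ▸ (hψ s hsm).differentiableAt.hasDerivAt
  have main : ∀ x ∈ Icc (0:ℝ) 1, ψ x = c * x := by
    apply eq_of_has_deriv_right_eq (f' := fun _ => c)
    · exact fun x hx => (key x hx).hasDerivWithinAt
    · intro x _
      simpa using ((hasDerivAt_id x).const_mul c).hasDerivWithinAt
    · exact fun x hx => (hψ x hx).continuousAt.continuousWithinAt
    · exact (continuous_const.mul continuous_id).continuousOn
    · simp [hψ0]
  have h1 : ψ 1 = c := by simpa using main 1 (by norm_num)
  intro x hx
  rw [main x hx, h1]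

/-- `gq f γ x y = f (x*y) - x*f y - y*f x - γ*f x*f y`. -/
noncomputable def gq (f : ℝ → ℝ) (γ x y : ℝ) : ℝ :=
  f (x * y) - x * f y - y * f x - γ * f x * f y

variable {f : ℝ → ℝ} {γ : ℝ}

lemma gq_zero_left (hf0 : f 0 = 0) (y : ℝ) : gq f γ 0 y = 0 := by simp [gq, hf0]
lemma gq_zero_right (hf0 : f 0 = 0) (x : ℝ) : gq f γ x 0 = 0 := by simp [gq, hf0]
lemma gq_one_left (hf1 : f 1 = 0) (y : ℝ) : gq f γ 1 y = 0 := by simp [gq, hf1]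
lemma gq_one_right (hf1 : f 1 = 0) (x : ℝ) : gq f γ x 1 = 0 := by simp [gq, hf1]
lemma gq_symm (x y : ℝ) : gq f γ x y = gq f γ y x := by simp [gq, mul_comm]; ring

lemma gq_analytic_left (hfa : ∀ x ∈ Set.Ici (0:ℝ), AnalyticAt ℝ f x) {y : ℝ} (hy : 0 ≤ y)
    {x : ℝ} (hx : 0 ≤ x) : AnalyticAt ℝ (fun x => gq f γ x y) x := by
  have h1 : AnalyticAt ℝ (fun x : ℝ => f (x * y)) x := by
    have hinner : AnalyticAt ℝ (fun x : ℝ => x * y) x := analyticAt_id.mul analyticAt_const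
    have hval : AnalyticAt ℝ f ((fun x : ℝ => x * y) x) := hfa _ (mul_nonneg hx hy)
    have := AnalyticAt.comp (𝕜 := ℝ) (g := f) (f := fun x : ℝ => x * y) hval hinner
    exact this
  have h2 : AnalyticAt ℝ (fun x : ℝ => x * f y) x := analyticAt_id.mul analyticAt_const
  have h3 : AnalyticAt ℝ (fun x : ℝ => y * f x) x := analyticAt_const.mul (hfa x hx)
  have h4 : AnalyticAt ℝ (fun x : ℝ => γ * f x * f y) x :=
    (analyticAt_const.mul (hfa x hx)).mul analyticAt_const
  exact ((h1.sub h2).sub h3).sub h4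

lemma gq_analytic_right (hfa : ∀ x ∈ Set.Ici (0:ℝ), AnalyticAt ℝ f x) {x : ℝ} (hx : 0 ≤ x)
    {y : ℝ} (hy : 0 ≤ y) : AnalyticAt ℝ (fun y => gq f γ x y) y := by
  have h1 : AnalyticAt ℝ (fun y : ℝ => f (x * y)) y := by
    have hinner : AnalyticAt ℝ (fun y : ℝ => x * y) y := analyticAt_const.mul analyticAt_id
    have hval : AnalyticAt ℝ f ((fun y : ℝ => x * y) y) := hfa _ (mul_nonneg hx hy)
    have := AnalyticAt.comp (𝕜 := ℝ) (g := f) (f := fun y : ℝ => x * y) hval hinner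
    exact this
  have h2 : AnalyticAt ℝ (fun y : ℝ => x * f y) y := analyticAt_const.mul (hfa y hy)
  have h3 : AnalyticAt ℝ (fun y : ℝ => y * f x) y := analyticAt_id.mul analyticAt_const
  have h4 : AnalyticAt ℝ (fun y : ℝ => γ * f x * f y) y :=
    analyticAt_const.mul (hfa y hy)
  exact ((h1.sub h2).sub h3).sub h4

/-- Key: the 3×3 grid identity plus analyticity forces `gq = 0` on the whole quadrant. -/
lemma gq_eq_zero (hfa : ∀ x ∈ Set.Ici (0:ℝ), AnalyticAt ℝ f x)
    (hf0 : f 0 = 0) (hf1 : f 1 = 0)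
    (hM : ∀ a b c d : ℝ, 0 ≤ a → 0 ≤ b → a + b ≤ 1 → 0 ≤ c → 0 ≤ d → c + d ≤ 1 →
      (gq f γ a c + gq f γ a d + gq f γ a (1-c-d))
        + (gq f γ b c + gq f γ b d + gq f γ b (1-c-d))
        + (gq f γ (1-a-b) c + gq f γ (1-a-b) d + gq f γ (1-a-b) (1-c-d)) = 0) :
    ∀ x y : ℝ, 0 ≤ x → 0 ≤ y → gq f γ x y = 0 := by
  -- step R : row sums vanish on [0,1]
  have hR : ∀ c d : ℝ, 0 ≤ c → 0 ≤ d → c + d ≤ 1 → ∀ u ∈ Icc (0:ℝ) 1,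
      gq f γ u c + gq f γ u d + gq f γ u (1-c-d) = 0 := by
    intro c d hc hd hcd
    set R : ℝ → ℝ := fun u => gq f γ u c + gq f γ u d + gq f γ u (1-c-d) with hRdef
    have hR0 : R 0 = 0 := by simp [hRdef, gq_zero_left hf0]
    have hR1 : R 1 = 0 := by simp [hRdef, gq_one_left hf1]
    have hflip : ∀ a : ℝ, 0 ≤ a → a ≤ 1 → R a + R (1 - a) = 0 := by
      intro a ha ha1
      have h9 := hM a (1-a) c d ha (by linarith) (by linarith) hc hd hcd
      rw [show (1:ℝ) - a - (1-a) = 0 by ring] at h9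
      simp only [gq_zero_left hf0] at h9
      simp only [hRdef]; linarith
    have hadd : ∀ a b : ℝ, 0 ≤ a → 0 ≤ b → a + b ≤ 1 → R (a + b) = R a + R b := by
      intro a b ha hb hab
      have h9 := hM a b c d ha hb hab hc hd hcd
      have hfl := hflip (a+b) (by linarith) hab
      rw [show (1:ℝ) - (a+b) = 1 - a - b by ring] at hfl
      simp only [hRdef] at hfl h9 ⊢
      linarith
    have hRan : ∀ u ∈ Icc (0:ℝ) 1, AnalyticAt ℝ R u := by
      intro u hu
      exact ((gq_analytic_left hfa hc hu.1).add (gq_analytic_left hfa hd hu.1)).add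
        (gq_analytic_left hfa (by linarith) hu.1)
    intro u hu
    have h := additive_linear R hRan hadd u hu
    rw [hR1, zero_mul] at h
    simpa [hRdef] using h
  -- flip in second variable
  have hflip2 : ∀ u ∈ Icc (0:ℝ) 1, ∀ c : ℝ, 0 ≤ c → c ≤ 1 →
      gq f γ u (1 - c) = - gq f γ u c := by
    intro u hu c hc hc1
    have := hR c (1-c) hc (by linarith) (by linarith) u hu
    rw [show (1:ℝ) - c - (1-c) = 0 by ring, gq_zero_right hf0] at this
    linarith
  -- g vanishes on [0,1]²
  have hsq : ∀ u ∈ Icc (0:ℝ) 1, ∀ y ∈ Icc (0:ℝ) 1, gq f γ u y = 0 := by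
    intro u hu
    set K : ℝ → ℝ := fun y => gq f γ u y with hKdef
    have hKadd : ∀ a b : ℝ, 0 ≤ a → 0 ≤ b → a + b ≤ 1 → K (a + b) = K a + K b := by
      intro a b ha hb hab
      have h3 := hR a b ha hb hab u hu
      have hfl := hflip2 u hu (a+b) (by linarith) hab
      rw [show (1:ℝ) - (a+b) = 1 - a - b by ring] at hfl
      simp only [hKdef] at *
      linarith
    have hKan : ∀ y ∈ Icc (0:ℝ) 1, AnalyticAt ℝ K y :=
      fun y hy => gq_analytic_right hfa hu.1 hy.1
    intro y hy
    have h := additive_linear K hKan hKadd y hy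
    rw [show K 1 = 0 from gq_one_right hf1 u, zero_mul] at h
    simpa [hKdef] using h
  -- extend in first variable by analytic continuation
  have hhalf : ∀ x : ℝ, 0 ≤ x → ∀ y ∈ Icc (0:ℝ) 1, gq f γ x y = 0 := by
    intro x hx y hy
    have han : AnalyticOnNhd ℝ (fun x => gq f γ x y) (Ici (0:ℝ)) :=
      fun x hx => gq_analytic_left hfa hy.1 hx
    have hev : (fun x => gq f γ x y) =ᶠ[𝓝 (1/2 : ℝ)] 0 := by
      filter_upwards [Ioo_mem_nhds (by norm_num : (0:ℝ) < 1/2) (by norm_num : (1/2:ℝ) < 1)]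
        with u hu
      exact hsq u ⟨hu.1.le, hu.2.le⟩ y hy
    exact han.eqOn_zero_of_preconnected_of_eventuallyEq_zero isPreconnected_Ici
      (by norm_num : (1/2:ℝ) ∈ Ici (0:ℝ)) hev hx
  -- extend in second variable
  intro x y hx hy
  have han : AnalyticOnNhd ℝ (fun y => gq f γ x y) (Ici (0:ℝ)) :=
    fun y hy => gq_analytic_right hfa hx hy
  have hev : (fun y => gq f γ x y) =ᶠ[𝓝 (1/2 : ℝ)] 0 := by
    filter_upwards [Ioo_mem_nhds (by norm_num : (0:ℝ) < 1/2) (by norm_num : (1/2:ℝ) < 1)]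
      with v hv
    exact hhalf x hx v ⟨hv.1.le, hv.2.le⟩
  exact han.eqOn_zero_of_preconnected_of_eventuallyEq_zero isPreconnected_Ici
    (by norm_num : (1/2:ℝ) ∈ Ici (0:ℝ)) hev hy

theorem stmt0 (f : ℝ → ℝ) (hf : IsEntropyGenerator f) (α β γ : ℝ)
    (h : ∀ p q : ℕ → ℝ, IsProbDist p → IsProbDist q →
      (-∑' ij : ℕ × ℕ, f (p ij.1 * q ij.2)) =
        α * (-∑' i, f (p i)) + β * (-∑' j, f (q j))
          - γ * (-∑' i, f (p i)) * (-∑' j, f (q j))) :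
    α = 1 ∧ β = 1 ∧
      ∀ x y : ℝ, 0 ≤ x → 0 ≤ y →
        f (x * y) = x * f y + y * f x + γ * f x * f y := by
  obtain ⟨hfa, hconv, hf0, hf1, -⟩ := hf
  -- f(1/2) < 0 by strict convexity
  have fhalf : f (1/2 : ℝ) < 0 := by
    have := hconv.2 (Set.self_mem_Ici) (show (1:ℝ) ∈ Set.Ici (0:ℝ) by norm_num)
      (by norm_num) (by norm_num : (0:ℝ) < 1/2) (by norm_num : (0:ℝ) < 1/2) (by norm_num)
    simp only [smul_eq_mul, mul_zero, mul_one, zero_add, hf0, hf1] at this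
    linarith
  -- master equation from finite distributions
  have hE : ∀ a b c d : ℝ, 0 ≤ a → 0 ≤ b → a + b ≤ 1 → 0 ≤ c → 0 ≤ d → c + d ≤ 1 →
      (f (a*c) + f (a*d) + f (a*(1-c-d))) + (f (b*c) + f (b*d) + f (b*(1-c-d)))
        + (f ((1-a-b)*c) + f ((1-a-b)*d) + f ((1-a-b)*(1-c-d)))
      = α * (f a + f b + f (1-a-b)) + β * (f c + f d + f (1-c-d))
        + γ * ((f a + f b + f (1-a-b)) * (f c + f d + f (1-c-d))) := by
    intro a b c d ha hb hab hc hd hcd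
    have h0 := h (d3 a b) (d3 c d) (d3_prob ha hb hab) (d3_prob hc hd hcd)
    rw [tsum3 hf0, tsum3 hf0, tsum9 hf0] at h0
    linear_combination -h0
  have hα : α = 1 := by
    have h0 := hE (1/2) (1/2) 1 0 (by norm_num) (by norm_num) (by norm_num)
      (by norm_num) (by norm_num) (by norm_num)
    norm_num [hf0, hf1] at h0
    have h1 : (α - 1) * (2 * f (1/2 : ℝ)) = 0 := by linear_combination -h0
    rcases mul_eq_zero.1 h1 with h2 | h2
    · linarith
    · linarith
  have hβ : β = 1 := by
    have h0 := hE 1 0 (1/2) (1/2) (by norm_num) (by norm_num) (by norm_num)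
      (by norm_num) (by norm_num) (by norm_num)
    norm_num [hf0, hf1] at h0
    have h1 : (β - 1) * (2 * f (1/2 : ℝ)) = 0 := by linear_combination -h0
    rcases mul_eq_zero.1 h1 with h2 | h2
    · linarith
    · linarith
  subst hα hβ
  refine ⟨rfl, rfl, ?_⟩
  have hM : ∀ a b c d : ℝ, 0 ≤ a → 0 ≤ b → a + b ≤ 1 → 0 ≤ c → 0 ≤ d → c + d ≤ 1 →
      (gq f γ a c + gq f γ a d + gq f γ a (1-c-d))
        + (gq f γ b c + gq f γ b d + gq f γ b (1-c-d))
        + (gq f γ (1-a-b) c + gq f γ (1-a-b) d + gq f γ (1-a-b) (1-c-d)) = 0 := by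
    intro a b c d ha hb hab hc hd hcd
    have h0 := hE a b c d ha hb hab hc hd hcd
    simp only [gq]
    linear_combination h0
  intro x y hx hy
  have := gq_eq_zero hfa hf0 hf1 hM x y hx hy
  simp only [gq] at this
  linarith
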